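/- If β is a real number with 0 < β < π and sin(π/3)·sin(π − (3/2)·β) = sin(β/2)·sin(π/6), then cos β = (1 − √3)/(2·√3). -/
import Mathlib

open Real

/-- The trigonometric equation of Proposition 7.12 (vertices `α³, γ⁴, β²δ²`, `f = 24`)
determines `cos β = (1 - √3)/(2√3)`. -/
theorem stmt_11 (β : ℝ) (h1 : 0 < β) (h2 : β < π)
    (h : Real.sin (π / 3) * Real.sin (π - 3 / 2 * β) =
      Real.sin (β / 2) * Real.sin (π / 6)) :
    Real.cos β = (1 - Real.sqrt 3) / (2 * Real.sqrt 3) := by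
  have hs3 : Real.sqrt 3 > 0 := by positivity
  have hsq : Real.sqrt 3 ^ 2 = 3 := Real.sq_sqrt (by norm_num)
  set s := Real.sin (β / 2) with hsdef
  have hspos : 0 < s := Real.sin_pos_of_pos_of_lt_pi (by linarith) (by linarith [Real.pi_pos])
  have h3 : Real.sin (π - 3 / 2 * β) = Real.sin (3 * (β / 2)) := by
    rw [Real.sin_pi_sub]; ring_nf
  rw [h3, Real.sin_three_mul, Real.sin_pi_div_three, Real.sin_pi_div_six] at h
  -- h : √3/2 * (3 s - 4 s^3) = s * (1/2)
  have key : 4 * Real.sqrt 3 * s ^ 2 = 3 * Real.sqrt 3 - 1 := by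
    have hs : s ≠ 0 := ne_of_gt hspos
    field_simp at h
    rw [← hsdef] at h
    nlinarith [hspos, hsq, mul_pos hspos hspos]
  have hcos : Real.cos β = 1 - 2 * s ^ 2 := by
    have h2m := Real.cos_two_mul (β / 2)
    have hpy := Real.sin_sq_add_cos_sq (β / 2)
    have : (2 : ℝ) * (β / 2) = β := by ring
    rw [this] at h2m
    nlinarith
  rw [hcos]
  field_simp
  nlinarith [key, hsq, hs3]
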